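/- Define functions g_k : ℝ → ℝ recursively by g_0(x) = x and g_{k+1}(x) = (x/(1−x))·g_k'(x), where g_k' denotes the derivative of g_k. Then for every nonnegative integer k and every real x with 0 < x < 1, the series ∑_{D=1}^{∞} (D^{D+k−1}/D!)·(x·e^{−x})^D converges and its sum equals g_k(x). -/

import Mathlib

/-- `gfun 0 x = x` and `gfun (k+1) x = (x/(1−x))·(gfun k)'(x)`: the operator
`(x/(1−x))·d/dx` applied `k` times to the function `x`. -/
noncomputable def gfun : ℕ → ℝ → ℝ
  | 0 => fun x => x
  | k + 1 => fun x => x / (1 - x) * deriv (gfun k) x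

namespace Stmt13Aux

open Real Finset
open scoped NNReal ENNReal

noncomputable def zf (x : ℝ) : ℝ := x * Real.exp (-x)

noncomputable def cf (k n : ℕ) : ℝ := ((n : ℝ) + 1) ^ (n + k) / (n + 1).factorial

lemma cf_nonneg (k n : ℕ) : 0 ≤ cf k n := by
  apply div_nonneg (by positivity) (by positivity)

lemma cf_succ (k n : ℕ) : cf (k + 1) n = cf k n * ((n : ℝ) + 1) := by
  unfold cf
  rw [show n + (k + 1) = (n + k) + 1 from rfl, pow_succ]
  ring

lemma hasDerivAt_zf (y : ℝ) : HasDerivAt zf ((1 - y) * Real.exp (-y)) y := by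
  have h1 : HasDerivAt (fun t : ℝ => Real.exp (-t)) (-Real.exp (-y)) y := by
    simpa [Function.comp_def] using ((Real.hasDerivAt_exp (-y)).comp y (hasDerivAt_neg y))
  have h2 := (hasDerivAt_id y).mul h1
  have h3 : (1:ℝ) * Real.exp (-y) + id y * -Real.exp (-y) = (1 - y) * Real.exp (-y) := by
    simp only [id]; ring
  rw [h3] at h2
  have hz : zf = (id * fun t => Real.exp (-t)) := by funext t; simp [zf]
  rw [hz]; exact h2

lemma zf_pos {x : ℝ} (hx : 0 < x) : 0 < zf x := by
  have := Real.exp_pos (-x); unfold zf; positivity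

lemma zf_strictMono : StrictMonoOn zf (Set.Icc (0:ℝ) 1) := by
  apply strictMonoOn_of_deriv_pos (convex_Icc 0 1)
  · exact fun y _ => (hasDerivAt_zf y).continuousAt.continuousWithinAt
  · intro y hy
    rw [interior_Icc] at hy
    rw [(hasDerivAt_zf y).deriv]
    have := Real.exp_pos (-y)
    nlinarith [hy.1, hy.2]

lemma zf_lt_inv_e {x : ℝ} (hx1 : x < 1) : zf x < Real.exp (-1) := by
  have h : x < Real.exp (x - 1) := by
    have := Real.add_one_lt_exp (x := x - 1) (by intro h; apply absurd (by linarith : x = 1) hx1.ne)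
    linarith
  have hepos := Real.exp_pos (-x)
  calc zf x = x * Real.exp (-x) := rfl
    _ < Real.exp (x - 1) * Real.exp (-x) := by
        exact mul_lt_mul_of_pos_right h hepos
    _ = Real.exp (-1) := by rw [← Real.exp_add]; ring_nf

lemma pow_le_fact_mul_exp (D : ℕ) : (D : ℝ) ^ D ≤ D.factorial * Real.exp D := by
  have h := Real.pow_div_factorial_le_exp (x := (D : ℝ)) (Nat.cast_nonneg D) D
  have hf : (0:ℝ) < D.factorial := by positivity
  rw [div_le_iff₀ hf] at h
  linarith [h]

lemma cf_succ_le (k n : ℕ) : cf (k + 1) n ≤ ((n : ℝ) + 1) ^ k * Real.exp (n + 1) := by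
  have h := pow_le_fact_mul_exp (n + 1)
  push_cast at h
  unfold cf
  rw [show n + (k + 1) = k + (n + 1) from by ring, pow_add]
  rw [div_le_iff₀ (by positivity : (0:ℝ) < (n+1).factorial)]
  have hk : (0:ℝ) ≤ ((n:ℝ)+1)^k := by positivity
  calc ((n:ℝ) + 1) ^ k * ((n:ℝ) + 1) ^ (n+1)
      ≤ ((n:ℝ) + 1) ^ k * ((n+1).factorial * Real.exp (n + 1)) := by
        apply mul_le_mul_of_nonneg_left _ hk
        push_cast
        exact h
    _ = ((n:ℝ) + 1) ^ k * Real.exp (n+1) * (n+1).factorial := by ring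

lemma cf_le (k n : ℕ) : cf k n ≤ ((n : ℝ) + 1) ^ k * Real.exp (n + 1) := by
  calc cf k n ≤ cf k n * ((n:ℝ) + 1) := by
        nlinarith [cf_nonneg k n, Nat.cast_nonneg (α := ℝ) n]
    _ = cf (k + 1) n := (cf_succ k n).symm
    _ ≤ ((n : ℝ) + 1) ^ k * Real.exp (n + 1) := cf_succ_le k n


-- summable (n+1)^k * r^n for |r|<1
lemma summable_add_one_pow_mul_geometric (k : ℕ) {r : ℝ} (hr : |r| < 1) :
    Summable (fun n : ℕ => ((n : ℝ) + 1) ^ k * r ^ n) := by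
  have key : ∀ n : ℕ, ((n : ℝ) + 1) ^ k * r ^ n
      = ∑ i ∈ range (k + 1), (k.choose i : ℝ) * ((n : ℝ) ^ i * r ^ n) := by
    intro n
    rw [add_pow, Finset.sum_mul]
    exact Finset.sum_congr rfl fun i _ => by ring
  simp_rw [key]
  apply summable_sum
  intro i _
  exact (summable_pow_mul_geometric_of_norm_lt_one i (by simpa using hr) : Summable (fun n : ℕ => (n:ℝ) ^ i * r ^ n)).mul_left _

lemma summable_main (k : ℕ) {q : ℝ} (hq0 : 0 ≤ q) (hq : q < Real.exp (-1)) :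
    Summable (fun n : ℕ => ((n : ℝ) + 1) ^ k * Real.exp (n + 1) * q ^ n) := by
  have hr : |Real.exp 1 * q| < 1 := by
    rw [abs_of_nonneg (by positivity)]
    calc Real.exp 1 * q < Real.exp 1 * Real.exp (-1) := by
          exact mul_lt_mul_of_pos_left hq (Real.exp_pos 1)
      _ = 1 := by rw [← Real.exp_add]; norm_num
  have key : ∀ n : ℕ, ((n : ℝ) + 1) ^ k * Real.exp (n + 1) * q ^ n
      = Real.exp 1 * (((n : ℝ) + 1) ^ k * (Real.exp 1 * q) ^ n) := by
    intro n
    have : Real.exp ((n : ℝ) + 1) = Real.exp 1 ^ (n + 1) := by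
      rw [← Real.exp_nat_mul]
      push_cast; ring_nf
    rw [this, mul_pow, pow_succ]
    ring
  simp_rw [key]
  exact (summable_add_one_pow_mul_geometric k hr).mul_left _

lemma altsum : ∀ (j M : ℕ), j < M →
    ∑ D ∈ Finset.range (M + 1), (-1 : ℝ) ^ D * (M.choose D : ℝ) * (D : ℝ) ^ j = 0 := by
  intro j
  induction j using Nat.strong_induction_on with
  | _ j IH =>
    intro M hM
    match j, hM with
    | 0, hM =>
      have hM0 : M ≠ 0 := by omega
      have h := Int.alternating_sum_range_choose_of_ne hM0
      have := congrArg (fun z : ℤ => (z : ℝ)) h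
      push_cast at this
      simpa [pow_zero, mul_one] using this
    | (j + 1), hM =>
      obtain ⟨M', rfl⟩ : ∃ M', M = M' + 1 := ⟨M - 1, by omega⟩
      rw [Finset.sum_range_succ']
      simp only [Nat.cast_zero, pow_zero, mul_one, Nat.choose_zero_right, Nat.cast_one]
      rw [zero_pow (by omega : j + 1 ≠ 0)]
      rw [mul_zero, add_zero]
      have key : ∀ D : ℕ, (-1 : ℝ) ^ (D + 1) * ((M' + 1).choose (D + 1) : ℝ) * ((D : ℝ) + 1) ^ (j + 1)
          = -(((M' : ℝ) + 1) * ((-1 : ℝ) ^ D * (M'.choose D : ℝ) * ((D : ℝ) + 1) ^ j)) := by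
        intro D
        have hc : ((M' + 1).choose (D + 1) : ℝ) * ((D : ℝ) + 1) = ((M' : ℝ) + 1) * (M'.choose D : ℝ) := by
          have := Nat.add_one_mul_choose_eq M' D
          have := congrArg (fun z : ℕ => (z : ℝ)) this
          push_cast at this
          linarith [this]
        calc (-1 : ℝ) ^ (D + 1) * ((M' + 1).choose (D + 1) : ℝ) * ((D : ℝ) + 1) ^ (j + 1)
            = (-1 : ℝ) ^ D * (-1) * ((((M' + 1).choose (D + 1) : ℝ)) * ((D : ℝ) + 1)) * ((D : ℝ) + 1) ^ j := by
              rw [pow_succ, pow_succ]; ring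
          _ = -(((M' : ℝ) + 1) * ((-1 : ℝ) ^ D * (M'.choose D : ℝ) * ((D : ℝ) + 1) ^ j)) := by
              rw [hc]; ring
      have key2 : ∀ D : ℕ, ((D : ℝ) + 1) ^ j = ∑ i ∈ range (j + 1), (j.choose i : ℝ) * (D : ℝ) ^ i := by
        intro D
        rw [add_pow]
        exact Finset.sum_congr rfl fun i _ => by ring
      push_cast
      have e1 : ∑ D ∈ range (M' + 1), (-1:ℝ) ^ (D + 1) * (((M' + 1).choose (D + 1) : ℝ)) * ((D : ℝ) + 1) ^ (j + 1)
          = ∑ D ∈ range (M' + 1), -(((M' : ℝ) + 1) * ((-1:ℝ) ^ D * (M'.choose D : ℝ) * ((D : ℝ) + 1) ^ j)) :=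
        Finset.sum_congr rfl fun D _ => key D
      rw [e1, Finset.sum_neg_distrib, ← Finset.mul_sum]
      have swap : ∑ D ∈ range (M' + 1), ((-1:ℝ) ^ D * (M'.choose D : ℝ) * ((D : ℝ) + 1) ^ j)
          = ∑ i ∈ range (j + 1), (j.choose i : ℝ) *
              ∑ D ∈ range (M' + 1), ((-1:ℝ) ^ D * (M'.choose D : ℝ) * (D : ℝ) ^ i) := by
        have : ∀ D : ℕ, (-1:ℝ) ^ D * (M'.choose D : ℝ) * ((D : ℝ) + 1) ^ j
            = ∑ i ∈ range (j + 1), (j.choose i : ℝ) * ((-1:ℝ) ^ D * (M'.choose D : ℝ) * (D : ℝ) ^ i) := by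
          intro D
          rw [key2 D, Finset.mul_sum]
          exact Finset.sum_congr rfl fun i _ => by ring
        simp_rw [this]
        rw [Finset.sum_comm]
        apply Finset.sum_congr rfl; intro i _
        rw [Finset.mul_sum]
      rw [swap]
      have z : ∑ i ∈ range (j + 1), (j.choose i : ℝ) *
          ∑ D ∈ range (M' + 1), ((-1:ℝ) ^ D * (M'.choose D : ℝ) * (D : ℝ) ^ i) = 0 := by
        apply Finset.sum_eq_zero
        intro i hi
        have hi' := Finset.mem_range.mp hi
        rw [IH i (by omega) M' (by omega), mul_zero]
      rw [z, mul_zero, neg_zero]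

lemma Sdiag (N : ℕ) :
    ∑ D ∈ Finset.range (N + 1),
      ((((D : ℝ) + 1) ^ D / (D + 1).factorial) * ((-((D : ℝ) + 1)) ^ (N - D) / (N - D).factorial))
    = if N = 0 then 1 else 0 := by
  rcases Nat.eq_zero_or_pos N with hN | hN
  · subst hN; norm_num
  · rw [if_neg (by omega)]
    have hA : ∑ D ∈ range (N + 1), (-1:ℝ) ^ (D + 1) * (((N + 1).choose (D + 1)) : ℝ) * ((D : ℝ) + 1) ^ N = 0 := by
      have h := altsum N (N + 1) (by omega)
      rw [Finset.sum_range_succ'] at h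
      have hz : ((0:ℕ) : ℝ) ^ N = 0 := by
        rw [Nat.cast_zero]; exact zero_pow (by omega)
      rw [hz] at h
      push_cast at h
      simpa using h
    have key : ∀ D ∈ range (N + 1),
        ((((D : ℝ) + 1) ^ D / (D + 1).factorial) * ((-((D : ℝ) + 1)) ^ (N - D) / (N - D).factorial))
        = ((-1:ℝ) ^ (N + 1) / (N + 1).factorial) *
            ((-1:ℝ) ^ (D + 1) * (((N + 1).choose (D + 1)) : ℝ) * ((D : ℝ) + 1) ^ N) := by
      intro D hD
      have hDN : D ≤ N := by have := Finset.mem_range.mp hD; omega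
      have hpow : ((D:ℝ) + 1) ^ D * ((D:ℝ) + 1) ^ (N - D) = ((D:ℝ) + 1) ^ N := by
        rw [← pow_add]; congr 1; omega
      have hch : (((N + 1).choose (D + 1)) : ℝ)
          = (N + 1).factorial / ((D + 1).factorial * (N - D).factorial) := by
        rw [Nat.cast_choose ℝ (by omega : D + 1 ≤ N + 1), Nat.succ_sub_succ]
      have hsign : (-1:ℝ) ^ (N - D) = (-1:ℝ) ^ (N + 1) * (-1:ℝ) ^ (D + 1) := by
        have h1 : (-1:ℝ) ^ (N - D) * (-1:ℝ) ^ (D + D + 2) = (-1:ℝ) ^ (N + 1) * (-1:ℝ) ^ (D + 1) := by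
          rw [← pow_add, ← pow_add]; congr 1; omega
        have h2 : (-1:ℝ) ^ (D + D + 2) = 1 := by
          rw [show D + D + 2 = 2 * (D + 1) from by ring, pow_mul]; norm_num
        rw [h2, mul_one] at h1; exact h1
      rw [neg_pow, hch, hsign, ← hpow]
      field_simp
    rw [Finset.sum_congr rfl key, ← Finset.mul_sum, hA, mul_zero]

lemma hasSum_exp_real (t : ℝ) : HasSum (fun m : ℕ => t ^ m / m.factorial) (Real.exp t) := by
  rw [Real.exp_eq_exp_ℝ]
  exact NormedSpace.expSeries_div_hasSum_exp t

lemma base_small {x : ℝ} (hx0 : 0 < x) (hxs : x ≤ 1 / 10) :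
    HasSum (fun n : ℕ => cf 0 n * zf x ^ (n + 1)) x := by
  set A : ℕ × ℕ → ℝ := fun p =>
    cf 0 p.1 * x ^ (p.1 + 1) * ((-((p.1 : ℝ) + 1) * x) ^ p.2 / p.2.factorial) with hA
  -- absolute values of fibers
  have habs : ∀ p : ℕ × ℕ, |A p| = cf 0 p.1 * x ^ (p.1 + 1) * ((((p.1 : ℝ) + 1) * x) ^ p.2 / p.2.factorial) := by
    rintro ⟨D, m⟩
    have h1 : 0 ≤ cf 0 D * x ^ (D + 1) := mul_nonneg (cf_nonneg 0 D) (by positivity)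
    rw [hA, abs_mul, abs_of_nonneg h1, abs_div, abs_of_nonneg (by positivity : (0:ℝ) ≤ (m.factorial : ℝ)), abs_pow]
    congr 2
    rw [abs_mul, abs_neg, abs_of_nonneg (by positivity : (0:ℝ) ≤ (D:ℝ) + 1), abs_of_nonneg hx0.le]
  -- summability of |A|
  have hfib_abs : ∀ D : ℕ, HasSum (fun m => |A (D, m)|)
      (cf 0 D * x ^ (D + 1) * Real.exp (((D : ℝ) + 1) * x)) := by
    intro D
    have := (hasSum_exp_real (((D : ℝ) + 1) * x)).mul_left (cf 0 D * x ^ (D + 1))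
    simpa [habs] using this
  have hsummableAbs : Summable (fun p => |A p|) := by
    rw [summable_prod_of_nonneg (fun p => abs_nonneg (A p))]
    refine ⟨fun D => (hfib_abs D).summable, ?_⟩
    have hts : ∀ D : ℕ, ∑' m, |A (D, m)| = cf 0 D * x ^ (D + 1) * Real.exp (((D : ℝ) + 1) * x) :=
      fun D => (hfib_abs D).tsum_eq
    rw [funext hts]
    -- compare with geometric series
    set r : ℝ := Real.exp 1 * (x * Real.exp x) with hr
    have hr0 : 0 ≤ r := by positivity
    have hr1 : r < 1 := by
      have he : Real.exp 1 < 2.7182818286 := Real.exp_one_lt_d9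
      have hex : Real.exp x ≤ Real.exp 1 := Real.exp_le_exp.mpr (by linarith)
      have : r ≤ Real.exp 1 * ((1/10) * Real.exp 1) := by
        rw [hr]
        apply mul_le_mul_of_nonneg_left _ (Real.exp_pos 1).le
        apply mul_le_mul hxs hex (Real.exp_pos x).le (by norm_num)
      nlinarith [Real.exp_pos 1]
    apply Summable.of_nonneg_of_le
      (fun D => mul_nonneg (mul_nonneg (cf_nonneg 0 D) (by positivity)) (Real.exp_pos _).le)
      (fun D => ?_)
      (((summable_geometric_of_lt_one hr0 hr1).mul_left r))
    -- bound : cf 0 D * x^(D+1) * exp((D+1)x) ≤ r * r^D = r^(D+1)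
    have hb1 : cf 0 D ≤ Real.exp (D + 1) := by
      have := cf_le 0 D; simpa using this
    have hb2 : x ^ (D + 1) * Real.exp (((D : ℝ) + 1) * x) = (x * Real.exp x) ^ (D + 1) := by
      rw [mul_pow]
      congr 1
      rw [← Real.exp_nat_mul]
      congr 1
      push_cast; ring
    have hb3 : Real.exp ((D : ℝ) + 1) = Real.exp 1 ^ (D + 1) := by
      rw [← Real.exp_nat_mul]; congr 1; push_cast; ring
    calc cf 0 D * x ^ (D + 1) * Real.exp (((D : ℝ) + 1) * x)
        = cf 0 D * (x ^ (D+1) * Real.exp (((D : ℝ) + 1) * x)) := by ring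
      _ ≤ Real.exp ((D:ℝ) + 1) * (x ^ (D+1) * Real.exp (((D : ℝ) + 1) * x)) := by
          apply mul_le_mul_of_nonneg_right hb1 (by positivity)
      _ = r ^ (D + 1) := by rw [hb2, hb3, hr, mul_pow, mul_pow]; ring
      _ = r * r ^ D := by rw [pow_succ]; ring
  have hsummable : Summable A := Summable.of_abs hsummableAbs
  obtain ⟨S, hS⟩ := hsummable
  -- fiberwise sums (without abs)
  have hfib : ∀ D : ℕ, HasSum (fun m => A (D, m)) (cf 0 D * zf x ^ (D + 1)) := by
    intro D
    have h := (hasSum_exp_real (-((D : ℝ) + 1) * x)).mul_left (cf 0 D * x ^ (D + 1))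
    have hval : cf 0 D * x ^ (D + 1) * Real.exp (-((D : ℝ) + 1) * x) = cf 0 D * zf x ^ (D + 1) := by
      have : Real.exp (-((D : ℝ) + 1) * x) = Real.exp (-x) ^ (D + 1) := by
        rw [← Real.exp_nat_mul]; congr 1; push_cast; ring
      rw [this, zf, mul_pow]; ring
    rw [hval] at h
    exact h
  have h1 : HasSum (fun D => cf 0 D * zf x ^ (D + 1)) S := hS.prod_fiberwise hfib
  -- diagonal grouping
  have hS' : HasSum (A ∘ Finset.HasAntidiagonal.sigmaAntidiagonalEquivProd) S :=
    (Finset.HasAntidiagonal.sigmaAntidiagonalEquivProd (A := ℕ)).hasSum_iff.mpr hS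
  have hfib2 : ∀ N : ℕ, HasSum (fun c : Finset.HasAntidiagonal.antidiagonal N =>
      (A ∘ Finset.HasAntidiagonal.sigmaAntidiagonalEquivProd) ⟨N, c⟩) (∑ p ∈ Finset.HasAntidiagonal.antidiagonal N, A p) := by
    intro N
    have := hasSum_fintype (fun c : Finset.HasAntidiagonal.antidiagonal N => A c)
    rwa [Finset.sum_coe_sort] at this
  have hdiag : HasSum (fun N => ∑ p ∈ Finset.HasAntidiagonal.antidiagonal N, A p) S := hS'.sigma hfib2
  -- compute the diagonal sums
  have hcompute : ∀ N : ℕ, ∑ p ∈ Finset.HasAntidiagonal.antidiagonal N, A p = if N = 0 then x else 0 := by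
    intro N
    rw [Finset.Nat.sum_antidiagonal_eq_sum_range_succ_mk]
    have hterm : ∀ D ∈ range (N + 1), A (D, N - D)
        = ((((D : ℝ) + 1) ^ D / (D + 1).factorial) * ((-((D : ℝ) + 1)) ^ (N - D) / (N - D).factorial)) * x ^ (N + 1) := by
      intro D hD
      have hDN : D ≤ N := by have := Finset.mem_range.mp hD; omega
      have hxp : x ^ (D + 1) * x ^ (N - D) = x ^ (N + 1) := by
        rw [← pow_add]; congr 1; omega
      rw [hA]
      simp only []
      rw [mul_pow]
      have : cf 0 D = ((D : ℝ) + 1) ^ D / (D + 1).factorial := by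
        unfold cf; norm_num
      rw [this]
      rw [← hxp]
      ring
    rw [Finset.sum_congr rfl hterm, ← Finset.sum_mul, Sdiag N]
    rcases Nat.eq_zero_or_pos N with h | h
    · subst h; norm_num
    · rw [if_neg (by omega), if_neg (by omega), zero_mul]
  rw [funext hcompute] at hdiag
  have : HasSum (fun N : ℕ => if N = 0 then x else 0) x := hasSum_ite_eq 0 x
  have hSx : S = x := hdiag.unique this
  rwa [hSx] at h1

noncomputable def cc : ℕ → ℝ
  | 0 => 0
  | n + 1 => cf 0 n

noncomputable def pser : FormalMultilinearSeries ℝ ℝ ℝ := FormalMultilinearSeries.ofScalars ℝ cc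

lemma cc_abs_le (n : ℕ) : |cc n| ≤ Real.exp 1 ^ n := by
  cases n with
  | zero => simp [cc]
  | succ n =>
    rw [show cc (n + 1) = cf 0 n from rfl, abs_of_nonneg (cf_nonneg 0 n)]
    have h := cf_le 0 n
    simp only [pow_zero, one_mul] at h
    calc cf 0 n ≤ Real.exp ((n : ℝ) + 1) := h
      _ = Real.exp 1 ^ (n + 1) := by rw [← Real.exp_nat_mul]; congr 1; push_cast; ring

lemma inv_e_le_radius : ENNReal.ofReal (Real.exp (-1)) ≤ pser.radius := by
  have h := pser.le_radius_of_bound 1 (r := Real.toNNReal (Real.exp (-1))) ?_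
  · rwa [← ENNReal.ofReal] at h
  · intro n
    have hn : ‖pser n‖ = |cc n| := by
      rw [pser, FormalMultilinearSeries.ofScalars_norm]
      exact Real.norm_eq_abs _
    rw [hn]
    have hco : ((Real.toNNReal (Real.exp (-1)) : ℝ≥0) : ℝ) = Real.exp (-1) :=
      Real.coe_toNNReal _ (Real.exp_pos _).le
    rw [hco]
    calc |cc n| * Real.exp (-1) ^ n ≤ Real.exp 1 ^ n * Real.exp (-1) ^ n := by
          apply mul_le_mul_of_nonneg_right (cc_abs_le n) (by positivity)
      _ = 1 := by
          rw [← mul_pow, ← Real.exp_add]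
          norm_num
  
lemma mem_ball_radius {y : ℝ} (hy : |y| < Real.exp (-1)) :
    y ∈ Metric.eball (0 : ℝ) pser.radius := by
  rw [Metric.mem_eball, edist_dist, dist_zero_right]
  calc ENNReal.ofReal ‖y‖ < ENNReal.ofReal (Real.exp (-1)) := by
        exact ENNReal.ofReal_lt_ofReal_iff_of_nonneg (norm_nonneg y) |>.mpr
          (by rwa [Real.norm_eq_abs])
    _ ≤ pser.radius := inv_e_le_radius

lemma hasSum_pser {y : ℝ} (hy : |y| < Real.exp (-1)) :
    HasSum (fun n : ℕ => cc n * y ^ n) (pser.sum y) := by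
  have h := pser.hasSum (mem_ball_radius hy)
  have he : ∀ n : ℕ, (pser n fun _ => y) = cc n * y ^ n := by
    intro n
    rw [pser, FormalMultilinearSeries.ofScalars_apply_eq]
    simp [smul_eq_mul]
  rwa [funext he] at h

lemma hasSum_pser_shift {y : ℝ} (hy : |y| < Real.exp (-1)) :
    HasSum (fun n : ℕ => cf 0 n * y ^ (n + 1)) (pser.sum y) := by
  have h := hasSum_pser hy
  have h2 : HasSum (fun n : ℕ => cc (n + 1) * y ^ (n + 1)) (pser.sum y) := by
    apply (hasSum_nat_add_iff (f := fun n : ℕ => cc n * y ^ n) 1).mpr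
    simpa [cc] using h
  exact h2

lemma zf_analyticAt (x : ℝ) : AnalyticAt ℝ zf x := by
  have h1 : AnalyticAt ℝ (fun y : ℝ => Real.exp (-y)) x := by
    apply AnalyticAt.comp (analyticAt_rexp (x := -x))
    exact analyticAt_id.neg
  exact analyticAt_id.mul h1

lemma phi_analytic : AnalyticOnNhd ℝ (fun x => pser.sum (zf x)) (Set.Ioo (0:ℝ) 1) := by
  intro x hx
  show AnalyticAt ℝ (pser.sum ∘ zf) x
  apply AnalyticAt.comp _ (zf_analyticAt x)
  have hrad : 0 < pser.radius :=
    lt_of_lt_of_le (by simp [ENNReal.ofReal_pos, Real.exp_pos]) inv_e_le_radius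
  have hball := (pser.hasFPowerSeriesOnBall hrad).analyticOnNhd
  apply hball
  apply mem_ball_radius
  rw [abs_of_nonneg (zf_pos hx.1).le]
  exact zf_lt_inv_e hx.2

lemma phi_eq_id : Set.EqOn (fun x => pser.sum (zf x)) (fun x => x) (Set.Ioo (0:ℝ) 1) := by
  apply AnalyticOnNhd.eqOn_of_preconnected_of_eventuallyEq phi_analytic
      (analyticOnNhd_id) (isPreconnected_Ioo) (show (1/20 : ℝ) ∈ Set.Ioo (0:ℝ) 1 by norm_num)
  have hmem : Set.Ioo (0:ℝ) (1/10) ∈ nhds (1/20 : ℝ) :=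
    Ioo_mem_nhds (by norm_num) (by norm_num)
  filter_upwards [hmem] with y hy
  have h1 := base_small hy.1 (le_of_lt hy.2)
  have h2 : HasSum (fun n : ℕ => cf 0 n * zf y ^ (n + 1)) (pser.sum (zf y)) := by
    apply hasSum_pser_shift
    rw [abs_of_nonneg (zf_pos hy.1).le]
    exact zf_lt_inv_e (by linarith [hy.2] : y < 1)
  exact h2.unique h1

lemma base_full {x : ℝ} (hx0 : 0 < x) (hx1 : x < 1) :
    HasSum (fun n : ℕ => cf 0 n * zf x ^ (n + 1)) x := by
  have h2 : HasSum (fun n : ℕ => cf 0 n * zf x ^ (n + 1)) (pser.sum (zf x)) := by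
    apply hasSum_pser_shift
    rw [abs_of_nonneg (zf_pos hx0).le]
    exact zf_lt_inv_e hx1
  have := phi_eq_id (Set.mem_Ioo.mpr ⟨hx0, hx1⟩)
  simp only at this
  rwa [this] at h2

lemma step (k : ℕ)
    (IH : ∀ y ∈ Set.Ioo (0:ℝ) 1, HasSum (fun n : ℕ => cf k n * zf y ^ (n + 1)) (gfun k y)) :
    ∀ x ∈ Set.Ioo (0:ℝ) 1, HasSum (fun n : ℕ => cf (k + 1) n * zf x ^ (n + 1)) (gfun (k + 1) x) := by
  intro x hx
  obtain ⟨hx0, hx1⟩ := hx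
  set b : ℝ := (x + 1) / 2 with hb
  have hxb : x < b := by rw [hb]; linarith
  have hb1 : b < 1 := by rw [hb]; linarith
  have hb0 : 0 < b := by rw [hb]; linarith
  set q : ℝ := zf b with hq
  have hq0 : 0 < q := zf_pos hb0
  have hqe : q < Real.exp (-1) := zf_lt_inv_e hb1
  set g : ℕ → ℝ → ℝ := fun n y => cf k n * zf y ^ (n + 1) with hgdef
  set g' : ℕ → ℝ → ℝ := fun n y => cf k n * (((n : ℝ) + 1) * zf y ^ n * ((1 - y) * Real.exp (-y)))
    with hg'def
  set u : ℕ → ℝ := fun n => cf (k + 1) n * q ^ n with hudef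
  have hg : ∀ (n : ℕ) (y : ℝ), HasDerivAt (g n) (g' n y) y := by
    intro n y
    have h := ((hasDerivAt_zf y).pow (n + 1)).const_mul (cf k n)
    have : (cf k n : ℝ) * (((n : ℕ) + 1 : ℕ) * zf y ^ (n + 1 - 1) * ((1 - y) * Real.exp (-y)))
        = g' n y := by
      rw [hg'def]
      push_cast
      norm_num
    rwa [this] at h
  have hg' : ∀ (n : ℕ), ∀ y ∈ Set.Ioo (0:ℝ) b, ‖g' n y‖ ≤ u n := by
    intro n y hy
    obtain ⟨hy0, hyb⟩ := hy
    have hy1 : y < 1 := lt_trans hyb hb1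
    have hzy : 0 < zf y := zf_pos hy0
    have hzyq : zf y ≤ q := by
      rw [hq]
      exact le_of_lt (zf_strictMono ⟨hy0.le, hy1.le⟩ ⟨hb0.le, hb1.le⟩ hyb)
    have he1 : (1 - y) * Real.exp (-y) ≤ 1 := by
      have h1 : Real.exp (-y) ≤ 1 := Real.exp_le_one_iff.mpr (by linarith)
      nlinarith [Real.exp_pos (-y)]
    have he0 : 0 ≤ (1 - y) * Real.exp (-y) := by
      have := Real.exp_pos (-y); nlinarith
    rw [hg'def, hudef]
    simp only [Real.norm_eq_abs]
    rw [abs_of_nonneg (mul_nonneg (cf_nonneg k n)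
      (mul_nonneg (mul_nonneg (by positivity) (pow_nonneg hzy.le n)) he0))]
    calc cf k n * (((n : ℝ) + 1) * zf y ^ n * ((1 - y) * Real.exp (-y)))
        ≤ cf k n * (((n : ℝ) + 1) * q ^ n * 1) := by
          apply mul_le_mul_of_nonneg_left _ (cf_nonneg k n)
          apply mul_le_mul
          · apply mul_le_mul_of_nonneg_left _ (by positivity : (0:ℝ) ≤ (n:ℝ) + 1)
            exact pow_le_pow_left₀ hzy.le hzyq n
          · exact he1
          · exact he0
          · positivity
      _ = cf (k + 1) n * q ^ n := by rw [cf_succ]; ring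
  have hu : Summable u := by
    apply Summable.of_nonneg_of_le
      (fun n => mul_nonneg (cf_nonneg (k+1) n) (by positivity))
      (fun n => ?_) (summable_main k hq0.le hqe)
    exact mul_le_mul_of_nonneg_right (cf_succ_le k n) (by positivity)
  have hg0 : Summable (fun n => g n x) := (IH x ⟨hx0, hx1⟩).summable
  have hxs : x ∈ Set.Ioo (0:ℝ) b := ⟨hx0, hxb⟩
  have hder : HasDerivAt (fun z => ∑' n, g n z) (∑' n, g' n x) x :=
    hasDerivAt_tsum_of_isPreconnected hu isOpen_Ioo isPreconnected_Ioo
      (fun n y _ => hg n y) hg' hxs hg0 hxs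
  have heq : (fun z => ∑' n, g n z) =ᶠ[nhds x] gfun k := by
    filter_upwards [Ioo_mem_nhds hx0 hx1] with y hy
    exact (IH y hy).tsum_eq
  have hder2 : HasDerivAt (gfun k) (∑' n, g' n x) x :=
    hder.congr_of_eventuallyEq heq.symm
  have hsum' : HasSum (fun n => g' n x) (∑' n, g' n x) :=
    (Summable.of_norm_bounded hu (fun n => hg' n x hxs)).hasSum
  have hmul := hsum'.mul_left (x / (1 - x))
  have h1x : (1:ℝ) - x ≠ 0 := by intro h; linarith [hx1]
  have hterm : (fun n => x / (1 - x) * g' n x) = fun n : ℕ => cf (k + 1) n * zf x ^ (n + 1) := by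
    funext n
    rw [hg'def, cf_succ]
    simp only []
    rw [show zf x ^ (n + 1) = zf x ^ n * (x * Real.exp (-x)) from by rw [pow_succ, zf]]
    field_simp
  rw [hterm] at hmul
  have hval : gfun (k + 1) x = x / (1 - x) * ∑' n, g' n x := by
    show x / (1 - x) * deriv (gfun k) x = _
    rw [hder2.deriv]
  rwa [← hval] at hmul


lemma main : ∀ k : ℕ, ∀ x ∈ Set.Ioo (0:ℝ) 1,
    HasSum (fun n : ℕ => cf k n * zf x ^ (n + 1)) (gfun k x) := by
  intro k
  induction k with
  | zero =>
    intro x hx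
    exact base_full hx.1 hx.2
  | succ k ih => exact step k ih

end Stmt13Aux

/-- for every `k ≥ 0` and `0 < x < 1`, the series
`∑_{D=1}^∞ (D^{D+k−1}/D!)·(x·e^{−x})^D` converges with sum `gfun k x`
(indexed by `n : ℕ` with `D = n+1`, so the exponent `D + k − 1` is `n + k`). -/
theorem stmt13 (k : ℕ) (x : ℝ) (hx0 : 0 < x) (hx1 : x < 1) :
    HasSum
      (fun n : ℕ =>
        ((n + 1 : ℕ) ^ (n + k) / (n + 1).factorial : ℝ) * (x * Real.exp (-x)) ^ (n + 1))
      (gfun k x) := by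
  have h := Stmt13Aux.main k x ⟨hx0, hx1⟩
  have he : (fun n : ℕ =>
        ((n + 1 : ℕ) ^ (n + k) / (n + 1).factorial : ℝ) * (x * Real.exp (-x)) ^ (n + 1))
      = fun n : ℕ => Stmt13Aux.cf k n * Stmt13Aux.zf x ^ (n + 1) := by
    funext n
    rw [Stmt13Aux.cf, Stmt13Aux.zf]
    push_cast
    ring
  rw [he]
  exact h
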